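/- Let X be a locally compact Hausdorff space, x₀ ∈ X, and F : ([0,∞),×) → (C_{x₀}(X),∘) a continuous injective monoid homomorphism with F(0) the constant map at x₀ and F(1) = Id_X. If D ⊆ X is compact with x₀ ∈ Int(D) and ⋃_{α∈[0,1)} F(α)(D) ⊆ Int(D), then the map f' : 𝒞_{x₀}([0,∞), Bd(D)) → X sending x₀ ↦ x₀ and (α,c) ↦ F(α)(c) is a homeomorphism. -/

import Mathlib

open Set Topology

/-- The relation on `[0,∞) × C` identifying `{0} × C` to a point. -/
def coneSetoidInf (C : Type*) : Setoid (Set.Ici (0 : ℝ) × C) where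
  r p q := p = q ∨ (p.1.1 = 0 ∧ q.1.1 = 0)
  iseqv := by
    refine ⟨fun p => Or.inl rfl, ?_, ?_⟩
    · rintro p q (rfl | ⟨h1, h2⟩)
      · exact Or.inl rfl
      · exact Or.inr ⟨h2, h1⟩
    · rintro p q r (rfl | ⟨h1, h2⟩) (rfl | ⟨h3, h4⟩)
      · exact Or.inl rfl
      · exact Or.inr ⟨h3, h4⟩
      · exact Or.inr ⟨h1, h2⟩
      · exact Or.inr ⟨h1, h4⟩

/-- The cone `𝒞_{x₀}([0,∞), C)`: the quotient of `[0,∞) × C` collapsing `{0} × C`. -/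
def ConeInf (C : Type*) : Type _ := Quotient (coneSetoidInf C)

instance (C : Type*) [TopologicalSpace C] : TopologicalSpace (ConeInf C) :=
  inferInstanceAs (TopologicalSpace (Quotient (coneSetoidInf C)))

/-- Under the hypotheses of the locally compact cone proposition, the natural map
`𝒞_{x₀}([0,∞), Bd D) → X`, `(α, c) ↦ F(α)(c)`, is a homeomorphism. -/
theorem stmt_15 {X : Type*} [TopologicalSpace X] [LocallyCompactSpace X] [T2Space X]
    (x₀ : X) (F : ℝ → C(X, X))
    (hcont : ContinuousOn F (Set.Ici (0 : ℝ)))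
    (hinjF : Set.InjOn F (Set.Ici (0 : ℝ)))
    (hmul : ∀ α ∈ Set.Ici (0 : ℝ), ∀ β ∈ Set.Ici (0 : ℝ),
      F (α * β) = (F α).comp (F β))
    (hfix : ∀ α ∈ Set.Ici (0 : ℝ), F α x₀ = x₀)
    (h0 : ∀ x : X, F 0 x = x₀)
    (h1 : ∀ x : X, F 1 x = x)
    (D : Set X) (hDcpt : IsCompact D) (hx₀ : x₀ ∈ interior D)
    (hsub : (⋃ α ∈ Set.Ico (0 : ℝ) 1, F α '' D) ⊆ interior D) :
    ∃ h : ConeInf (frontier D) ≃ₜ X,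
      ∀ (a : Set.Ici (0 : ℝ)) (c : frontier D),
        h (Quotient.mk (coneSetoidInf (frontier D)) (a, c)) = F a.1 c.1 := by
  classical
  have hDclosed : IsClosed D := hDcpt.isClosed
  have hfrD : frontier D ⊆ D := hDclosed.frontier_subset
  have hfrcpt : IsCompact (frontier D) :=
    hDcpt.of_isClosed_subset isClosed_frontier hfrD
  -- composition evaluated
  have hcomp : ∀ α : ℝ, 0 ≤ α → ∀ β : ℝ, 0 ≤ β → ∀ x : X,
      F (α * β) x = F α (F β x) := by
    intro α hα β hβ x
    rw [hmul α hα β hβ]; rfl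
  -- inverses
  have hinv : ∀ α : ℝ, 0 < α → ∀ x : X, F α (F (1 / α) x) = x := by
    intro α hα x
    have h := hcomp α hα.le (1 / α) (by positivity) x
    rw [mul_one_div_cancel hα.ne'] at h
    rw [← h, h1]
  have hinv' : ∀ α : ℝ, 0 < α → ∀ x : X, F (1 / α) (F α x) = x := by
    intro α hα x
    have := hinv (1 / α) (by positivity) x
    rwa [one_div_one_div] at this
  have hFinj : ∀ α : ℝ, 0 < α → Function.Injective (F α) := by
    intro α hα x y hxy
    have hx := hinv' α hα x
    rw [hxy, hinv' α hα y] at hx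
    exact hx.symm
  -- contraction
  have hcontract : ∀ γ : ℝ, 0 ≤ γ → γ < 1 → ∀ x ∈ D, F γ x ∈ interior D := by
    intro γ hγ0 hγ1 x hx
    exact hsub (mem_biUnion ⟨hγ0, hγ1⟩ (mem_image_of_mem _ hx))
  -- continuity of the joint evaluation map
  have hFrest : Continuous (fun a : Set.Ici (0:ℝ) => F a.1) :=
    continuousOn_iff_continuous_restrict.mp hcont
  have hPhi : Continuous (fun p : Set.Ici (0:ℝ) × X => F p.1.1 p.2) := by
    have heval : Continuous (fun p : C(X, X) × X => p.1 p.2) :=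
      continuous_eval
    exact heval.comp ((hFrest.comp continuous_fst).prodMk continuous_snd)
  have horb : ∀ x : X, ContinuousOn (fun β : ℝ => F β x) (Set.Ici (0:ℝ)) := by
    intro x
    rw [continuousOn_iff_continuous_restrict]
    exact hPhi.comp (continuous_id.prodMk continuous_const)
  -- uniform smallness near 0
  have hsmall : ∀ U : Set X, IsOpen U → x₀ ∈ U →
      ∃ δ > (0:ℝ), ∀ γ : ℝ, 0 ≤ γ → γ < δ → ∀ y ∈ D, F γ y ∈ U := by
    intro U hU hx₀U
    have hV : IsOpen {f : C(X, X) | Set.MapsTo f D U} :=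
      ContinuousMap.isOpen_setOf_mapsTo hDcpt hU
    have hF0 : F 0 ∈ {f : C(X, X) | Set.MapsTo f D U} := by
      intro y _; rw [h0]; exact hx₀U
    have hc : F ⁻¹' {f : C(X, X) | Set.MapsTo f D U} ∈ 𝓝[Set.Ici (0:ℝ)] 0 :=
      hcont 0 Set.self_mem_Ici (hV.mem_nhds hF0)
    rw [mem_nhdsGE_iff_exists_Ico_subset] at hc
    obtain ⟨u, hu, hsub'⟩ := hc
    exact ⟨u, hu, fun γ hγ0 hγu y hy => hsub' ⟨hγ0, hγu⟩ hy⟩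
  -- orbit enters interior near 0
  have hnear : ∀ x : X, ∃ ε > (0:ℝ), ∀ γ : ℝ, 0 ≤ γ → γ < ε →
      F γ x ∈ interior D := by
    intro x
    have hcw : ContinuousWithinAt (fun β : ℝ => F β x) (Set.Ici (0:ℝ)) 0 :=
      (horb x) 0 Set.self_mem_Ici
    have h0x : F 0 x = x₀ := h0 x
    have : (fun β : ℝ => F β x) ⁻¹' (interior D) ∈ 𝓝[Set.Ici (0:ℝ)] 0 := by
      apply hcw
      show interior D ∈ 𝓝 (F (0:ℝ) x)
      rw [h0x]
      exact isOpen_interior.mem_nhds hx₀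
    rw [mem_nhdsGE_iff_exists_Ico_subset] at this
    obtain ⟨u, hu, hsub'⟩ := this
    exact ⟨u, hu, fun γ hγ0 hγu => hsub' ⟨hγ0, hγu⟩⟩
  -- surjectivity core
  have hsurj : ∀ x : X, x ≠ x₀ → ∃ β : ℝ, 0 < β ∧ F β x ∈ frontier D := by
    intro x hx
    obtain ⟨ε, hε, hεmem⟩ := hnear x
    set S : Set ℝ := Set.Ici (0:ℝ) ∩ (fun β : ℝ => F β x) ⁻¹' D with hS
    have hSmem : ∀ β : ℝ, β ∈ S ↔ 0 ≤ β ∧ F β x ∈ D := fun β => Iff.rfl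
    have hSne : (ε / 2) ∈ S := by
      refine ⟨Set.mem_Ici.mpr (by positivity), ?_⟩
      show F (ε/2) x ∈ D
      exact interior_subset (hεmem (ε/2) (by positivity) (by linarith))
    have hSbdd : BddAbove S := by
      by_contra hbdd
      obtain ⟨δ, hδ, hδmem⟩ := hsmall {x}ᶜ isOpen_compl_singleton
        (by simpa using (Ne.symm hx))
      obtain ⟨β, hβS, hβgt⟩ := not_bddAbove_iff.mp hbdd (max (1/δ) 1)
      have hβ1 : (1:ℝ) < β := lt_of_le_of_lt (le_max_right _ _) hβgt
      have hβpos : 0 < β := by linarith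
      have hβδ : 1 / β < δ := by
        rw [div_lt_iff₀ hβpos]
        have h1δ : 1 / δ < β := lt_of_le_of_lt (le_max_left _ _) hβgt
        calc (1:ℝ) = δ * (1/δ) := by field_simp
          _ < δ * β := by exact mul_lt_mul_of_pos_left h1δ hδ
      have : F (1/β) (F β x) ∈ ({x}ᶜ : Set X) :=
        hδmem (1/β) (by positivity) hβδ _ hβS.2
      rw [hinv' β hβpos x] at this
      exact this rfl
    have hSclosed : IsClosed S :=
      (horb x).preimage_isClosed_of_isClosed isClosed_Ici hDclosed
    have hScpt : IsCompact S := by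
      apply Metric.isCompact_of_isClosed_isBounded hSclosed
      obtain ⟨M, hM⟩ := hSbdd
      exact (Metric.isBounded_Icc 0 M).subset (fun β hβ => ⟨hβ.1, hM hβ⟩)
    set β₀ := sSup S with hβ₀def
    have hβ₀S : β₀ ∈ S := hScpt.sSup_mem ⟨_, hSne⟩
    have hβ₀pos : 0 < β₀ := by
      have hε2 : (0:ℝ) < ε/2 := by positivity
      exact lt_of_lt_of_le hε2 (le_csSup hSbdd hSne)
    refine ⟨β₀, hβ₀pos, ?_⟩
    rw [hDclosed.frontier_eq]
    refine ⟨hβ₀S.2, fun hint => ?_⟩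
    -- if F β₀ x ∈ interior D, can go further
    have hcw : ContinuousWithinAt (fun β : ℝ => F β x) (Set.Ici (0:ℝ)) β₀ :=
      (horb x) β₀ hβ₀S.1
    have hmem : (fun β : ℝ => F β x) ⁻¹' (interior D) ∈ 𝓝[Set.Ici (0:ℝ)] β₀ :=
      hcw (isOpen_interior.mem_nhds hint)
    rw [mem_nhdsWithin] at hmem
    obtain ⟨V, hVopen, hVβ₀, hVsub⟩ := hmem
    obtain ⟨r, hr, hball⟩ := Metric.isOpen_iff.mp hVopen β₀ hVβ₀
    have hβ' : β₀ + r/2 ∈ V := by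
      apply hball
      rw [Metric.mem_ball, Real.dist_eq, show β₀ + r/2 - β₀ = r/2 by ring,
        abs_of_nonneg (by linarith)]
      linarith
    have hβ₀0 : (0:ℝ) ≤ β₀ := hβ₀S.1
    have hβ'S : β₀ + r/2 ∈ S := by
      constructor
      · show (0:ℝ) ≤ β₀ + r/2
        linarith
      · show F (β₀ + r/2) x ∈ D
        exact interior_subset (hVsub ⟨hβ', show (0:ℝ) ≤ β₀ + r/2 by linarith⟩)
    have := le_csSup hSbdd hβ'S
    linarith
  -- the candidate map
  set q : Set.Ici (0:ℝ) × (frontier D) → ConeInf (frontier D) :=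
    Quotient.mk (coneSetoidInf (frontier D)) with hq
  set f0 : Set.Ici (0:ℝ) × (frontier D) → X := fun p => F p.1.1 p.2.1 with hf0
  have hresp : ∀ p p' : Set.Ici (0:ℝ) × (frontier D),
      (coneSetoidInf (frontier D)).r p p' → f0 p = f0 p' := by
    rintro p p' (rfl | ⟨ha, hb⟩)
    · rfl
    · simp only [hf0, ha, hb, h0]
  have hf0cont : Continuous f0 :=
    hPhi.comp (continuous_fst.prodMk (continuous_subtype_val.comp continuous_snd))
  set fbar : ConeInf (frontier D) → X := Quotient.lift f0 hresp with hfbar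
  have hfbarcont : Continuous fbar := hf0cont.quotient_lift hresp
  have hfbarmk : ∀ p : Set.Ici (0:ℝ) × (frontier D), fbar (q p) = f0 p := fun p => rfl
  -- injectivity
  have hfr_not_x₀ : ∀ c : frontier D, (c : X) ≠ x₀ := by
    intro c hc
    have : (c : X) ∈ interior D := hc ▸ hx₀
    exact (c.2.2 this)
  have hinj : Function.Injective fbar := by
    intro p p' hpp'
    induction p using Quotient.inductionOn with | h p =>
    induction p' using Quotient.inductionOn with | h p' =>
    obtain ⟨a, c⟩ := p
    obtain ⟨b, d⟩ := p'
    have hval : F a.1 c.1 = F b.1 d.1 := hpp'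
    rcases eq_or_lt_of_le (show (0:ℝ) ≤ a.1 from a.2) with ha0 | hapos
    · rcases eq_or_lt_of_le (show (0:ℝ) ≤ b.1 from b.2) with hb0 | hbpos
      · exact Quotient.sound (Or.inr ⟨ha0.symm, hb0.symm⟩)
      · exfalso
        have : F b.1 d.1 = x₀ := by rw [← hval, ← ha0, h0]
        have hd : (d : X) = x₀ := by
          apply hFinj b.1 hbpos
          rw [this, hfix b.1 b.2]
        exact hfr_not_x₀ d hd
    · rcases eq_or_lt_of_le (show (0:ℝ) ≤ b.1 from b.2) with hb0 | hbpos
      · exfalso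
        have : F a.1 c.1 = x₀ := by rw [hval, ← hb0, h0]
        have hc : (c : X) = x₀ := by
          apply hFinj a.1 hapos
          rw [this, hfix a.1 a.2]
        exact hfr_not_x₀ c hc
      · -- both positive
        have key : ∀ (u v : Set.Ici (0:ℝ)) (y z : frontier D), 0 < u.1 → 0 < v.1 →
            u.1 < v.1 → F u.1 y.1 = F v.1 z.1 → False := by
          intro u v y z hu hv huv heq
          have : F (u.1 / v.1) y.1 = z.1 := by
            have h' : F (1/v.1) (F u.1 y.1) = F (1/v.1) (F v.1 z.1) := by rw [heq]
            rw [hinv' v.1 hv] at h'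
            rw [← h', ← hcomp (1/v.1) (by positivity) u.1 hu.le]
            ring_nf
          have hzint : (z : X) ∈ interior D := by
            rw [← this]
            exact hcontract _ (by positivity) (by rw [div_lt_one hv]; exact huv) _ (hfrD y.2)
          exact z.2.2 hzint
        rcases lt_trichotomy a.1 b.1 with hab | hab | hab
        · exact absurd (key a b c d hapos hbpos hab hval) (fun h => h)
        · have hceq : (c : X) = d := by
            apply hFinj a.1 hapos
            rw [hval, hab]
          exact Quotient.sound (Or.inl (by
            ext
            · exact hab
            · exact hceq))
        · exact absurd (key b a d c hbpos hapos hab hval.symm) (fun h => h)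
  -- surjectivity
  have hsur : Function.Surjective fbar := by
    intro x
    by_cases hx : x = x₀
    · -- need some frontier point
      have hne : ∃ y : X, y ≠ x₀ := by
        by_contra hall
        push_neg at hall
        have : F 0 = F 1 := by
          ext y
          rw [h0, h1, hall y]
        exact absurd (hinjF (Set.mem_Ici.mpr (le_refl 0)) (Set.mem_Ici.mpr zero_le_one) this) (by norm_num)
      obtain ⟨y, hy⟩ := hne
      obtain ⟨β, hβ, hβfr⟩ := hsurj y hy
      refine ⟨q (⟨0, Set.self_mem_Ici⟩, ⟨F β y, hβfr⟩), ?_⟩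
      rw [hfbarmk]
      simp only [hf0]
      rw [h0, hx]
    · obtain ⟨β, hβ, hβfr⟩ := hsurj x hx
      refine ⟨q (⟨1/β, Set.mem_Ici.mpr (by positivity)⟩, ⟨F β x, hβfr⟩), ?_⟩
      rw [hfbarmk]
      exact hinv' β hβ x
  -- image = preimage under inverse, monotonicity, openness of F α '' s
  have himg : ∀ α : ℝ, 0 < α → ∀ s : Set X, F α '' s = F (1/α) ⁻¹' s := by
    intro α hα s
    ext y
    constructor
    · rintro ⟨z, hz, rfl⟩
      rwa [Set.mem_preimage, hinv' α hα]
    · intro hy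
      exact ⟨F (1/α) y, hy, hinv α hα y⟩
  have hmono : ∀ a b : ℝ, 0 < a → a ≤ b → F a '' (interior D) ⊆ F b '' (interior D) := by
    intro a b ha hab
    rcases eq_or_lt_of_le hab with rfl | hlt
    · exact subset_rfl
    · rintro y ⟨z, hz, rfl⟩
      have hbpos : 0 < b := lt_trans ha hlt
      refine ⟨F (a/b) z, hcontract _ (by positivity) (by rw [div_lt_one hbpos]; exact hlt) _ (interior_subset hz), ?_⟩
      rw [← hcomp b hbpos.le (a/b) (by positivity)]
      congr 1
      field_simp
  -- preimages of compacts are compact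
  have hpre : ∀ K : Set X, IsCompact K → IsCompact (fbar ⁻¹' K) := by
    intro K hK
    -- cover K by F (n+1) '' interior D
    have hcover : K ⊆ ⋃ n : ℕ, F (n+1 : ℝ) '' (interior D) := by
      intro x hxK
      obtain ⟨ε, hε, hεmem⟩ := hnear x
      set γ := min (ε/2) (1/2) with hγdef
      have hγpos : 0 < γ := by positivity
      have hγlt : γ < ε := lt_of_le_of_lt (min_le_left _ _) (by linarith)
      have hmem : F γ x ∈ interior D := hεmem γ hγpos.le hγlt
      obtain ⟨n, hn⟩ := exists_nat_ge (1/γ)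
      have h1n : 1/γ ≤ (n:ℝ)+1 := by linarith
      refine Set.mem_iUnion.mpr ⟨n, hmono (1/γ) ((n:ℝ)+1) (by positivity) h1n
        ⟨F γ x, hmem, hinv' γ hγpos x⟩⟩
    obtain ⟨t, ht⟩ := hK.elim_finite_subcover (fun n : ℕ => F (n+1 : ℝ) '' (interior D))
      (fun n => by
        show IsOpen (F ((n:ℝ)+1) '' (interior D))
        rw [himg ((n:ℝ)+1) (by positivity)]
        exact isOpen_interior.preimage (F (1/((n:ℝ)+1))).continuous) hcover
    -- take N = max of t
    obtain ⟨N, hN⟩ : ∃ N : ℕ, K ⊆ F ((N:ℝ)+1) '' (interior D) := by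
      rcases t.eq_empty_or_nonempty with rfl | htne
      · refine ⟨0, fun x hx => ?_⟩
        simp only [Finset.notMem_empty, Set.iUnion_of_empty, Set.iUnion_empty,
          Set.subset_empty_iff] at ht
        rw [ht] at hx
        exact hx.elim
      · obtain ⟨N, hNmem, hNmax⟩ := t.exists_max_image (fun n => n) htne
        refine ⟨N, fun x hx => ?_⟩
        obtain ⟨n, hn, hxn⟩ := Set.mem_iUnion₂.mp (ht hx)
        exact hmono ((n:ℝ)+1) ((N:ℝ)+1) (by positivity)
          (by exact_mod_cast by simpa using Nat.succ_le_succ (hNmax n hn)) hxn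
    -- compact candidate
    haveI : CompactSpace (frontier D) := isCompact_iff_compactSpace.mp hfrcpt
    set g : Set.Icc (0:ℝ) ((N:ℝ)+1) → Set.Ici (0:ℝ) := fun t => ⟨t.1, t.2.1⟩ with hg
    have hgcont : Continuous g := Continuous.subtype_mk continuous_subtype_val _
    have hA : IsCompact (Set.range g) := isCompact_range hgcont
    have hC : IsCompact (q '' ((Set.range g) ×ˢ (Set.univ : Set (frontier D)))) :=
      ((hA.prod isCompact_univ).image continuous_quotient_mk')
    apply hC.of_isClosed_subset (hK.isClosed.preimage hfbarcont)
    rintro p hp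
    induction p using Quotient.inductionOn with | h p =>
    obtain ⟨a, c⟩ := p
    have hval : F a.1 c.1 ∈ K := hp
    have haN : a.1 ≤ (N:ℝ)+1 := by
      by_contra hgt
      push_neg at hgt
      have hapos : 0 < a.1 := by linarith [Nat.cast_nonneg (α := ℝ) N]
      obtain ⟨y, hy, hey⟩ := hN hval
      have : (c : X) ∈ interior D := by
        have h' : F (((N:ℝ)+1)/a.1) y = c.1 := by
          have := congrArg (F (1/a.1)) hey
          rw [hinv' a.1 hapos] at this
          rw [← this, ← hcomp (1/a.1) (by positivity) ((N:ℝ)+1) (by positivity)]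
          ring_nf
        rw [← h']
        exact hcontract _ (by positivity) (by rw [div_lt_one hapos]; exact hgt) _ (interior_subset hy)
      exact c.2.2 this
    exact ⟨(a, c), ⟨⟨⟨a.1, ⟨a.2, haN⟩⟩, rfl⟩, trivial⟩, rfl⟩
  -- proper, hence closed
  have hproper : IsProperMap fbar :=
    isProperMap_iff_isCompact_preimage.mpr ⟨hfbarcont, fun K hK => hpre K hK⟩
  have hclosed : IsClosedMap fbar := hproper.isClosedMap
  set e : ConeInf (frontier D) ≃ X := Equiv.ofBijective fbar ⟨hinj, hsur⟩ with he
  have hsymm : Continuous e.symm := by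
    rw [continuous_iff_isClosed]
    intro s hs
    have : e.symm ⁻¹' s = fbar '' s := by
      rw [← Equiv.image_eq_preimage_symm]
      rfl
    rw [this]
    exact hclosed s hs
  refine ⟨⟨e, hfbarcont, hsymm⟩, fun a c => rfl⟩
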